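/- Let Z and Y be simplicial sets in which every edge is invertible. If a map g : Z → Y has the right lifting property with respect to the map b(Λ[n,k]) → b(Δ[n]) for every n ≥ 1 and 0 ≤ k ≤ n, then g is a Kan fibration. -/

import Mathlib

open CategoryTheory Simplicial CategoryTheory.Limits Opposite

namespace IndexedPaper
/-- The chaotic preorder on two objects. -/
inductive TwoObj : Type where
  | zero
  | one

instance : Preorder TwoObj where
  le _ _ := True
  le_refl _ := trivial
  le_trans _ _ _ _ _ := trivial

/-- `bΔ[1]`, the nerve of the groupoid with two objects and exactly one morphism
between every ordered pair of objects. -/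
def bDelta1 : SSet := CategoryTheory.nerve TwoObj

/-- `δ : Δ[1] ⟶ bΔ[1]`, classifying the morphism from the first object to the second. -/
noncomputable def deltaB : Δ[1] ⟶ bDelta1 :=
  (SSet.yonedaEquiv (X := bDelta1) (n := ⦋1⦌)).symm
    (CategoryTheory.ComposableArrows.mk₁ (homOfLE trivial : TwoObj.zero ⟶ TwoObj.one))

/-- An edge `x : Δ[1] ⟶ X` is invertible if it extends along `δ` to `bΔ[1]`. -/
def IsInvertibleEdge {X : SSet} (x : Δ[1] ⟶ X) : Prop :=
  ∃ y : bDelta1 ⟶ X, deltaB ≫ y = x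

/-- A Kan complex: every horn (`n ≥ 1`, `0 ≤ k ≤ n`) has a filler. -/
def IsKanComplex (K : SSet) : Prop :=
  ∀ ⦃n : ℕ⦄, 1 ≤ n → ∀ (k : Fin (n + 1)) (f : (Λ[n, k] : SSet) ⟶ K),
    ∃ g : Δ[n] ⟶ K, Λ[n, k].ι ≫ g = f

/-- A Kan fibration: right lifting property with respect to all horn inclusions
(`n ≥ 1`, `0 ≤ k ≤ n`). -/
def IsKanFibration {X Y : SSet} (p : X ⟶ Y) : Prop :=
  ∀ ⦃n : ℕ⦄, 1 ≤ n → ∀ (k : Fin (n + 1)), HasLiftingProperty Λ[n, k].ι p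

/-! ### Yoneda naturality lemmas -/

lemma yE_comp {X Y : SSet} (f : X ⟶ Y) {n : SimplexCategory}
    (g : SSet.stdSimplex.obj n ⟶ X) :
    SSet.yonedaEquiv (X := Y) (n := n) (g ≫ f) = f.app (op n) (SSet.yonedaEquiv (X := X) (n := n) g) := rfl

lemma yE_symm_comp {X Y : SSet} (f : X ⟶ Y) {n : SimplexCategory} (x : X.obj (op n)) :
    (SSet.yonedaEquiv (X := Y) (n := n)).symm (f.app (op n) x) = (SSet.yonedaEquiv (X := X) (n := n)).symm x ≫ f := by
  apply (SSet.yonedaEquiv (X := Y) (n := n)).injective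
  rw [Equiv.apply_symm_apply, yE_comp, Equiv.apply_symm_apply]

lemma yE_symm_map {X : SSet} {m n : SimplexCategory} (f : m ⟶ n) (x : X.obj (op n)) :
    (SSet.yonedaEquiv (X := X) (n := m)).symm (X.map f.op x) =
      SSet.stdSimplex.map f ≫ (SSet.yonedaEquiv (X := X) (n := n)).symm x := by
  exact (SSet.yonedaEquiv_symm_naturality_left f x).symm

/-! ### The functor `G` -/

/-- The set of simplices of `X` all of whose edges are invertible. -/
def GSet (X : SSet) (n : SimplexCategoryᵒᵖ) : Set (X.obj n) :=
  {x | ∀ e : Δ[1] ⟶ SSet.stdSimplex.obj n.unop,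
    IsInvertibleEdge (e ≫ (SSet.yonedaEquiv (X := X) (n := n.unop)).symm x)}

/-- `G X`, the simplicial subset of `X` consisting of the simplices all of whose
edges are invertible. -/
def GObj (X : SSet) : SSet where
  obj n := GSet X n
  map := fun {n m} f => ↾fun x => ⟨X.map f x.1, by
    intro e
    have h := x.2 (e ≫ SSet.stdSimplex.map f.unop)
    have heq : (SSet.yonedaEquiv (X := X) (n := m.unop)).symm (X.map f x.1) =
        SSet.stdSimplex.map f.unop ≫ (SSet.yonedaEquiv (X := X) (n := n.unop)).symm x.1 :=
      yE_symm_map f.unop x.1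
    rw [heq, ← Category.assoc]
    exact h⟩
  map_id n := by
    ext x
    exact FunctorToTypes.map_id_apply X x.1
  map_comp f g := by
    ext x
    exact FunctorToTypes.map_comp_apply X f g x.1

/-- `ε_X : G X ⟶ X`, the inclusion. -/
def epsilon (X : SSet) : GObj X ⟶ X where
  app n := ↾fun x => x.1
  naturality _ _ _ := rfl

/-- The functorial action of `G` on a map of simplicial sets. -/
def Gmap {X Y : SSet} (f : X ⟶ Y) : GObj X ⟶ GObj Y where
  app n := ↾fun x => ⟨f.app n x.1, by
    intro e
    obtain ⟨y, hy⟩ := x.2 e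
    refine ⟨y ≫ f, ?_⟩
    have : (SSet.yonedaEquiv (X := Y) (n := n.unop)).symm (f.app n x.1) =
        (SSet.yonedaEquiv (X := X) (n := n.unop)).symm x.1 ≫ f := yE_symm_comp f x.1
    simp only [this, ← Category.assoc, hy]⟩
  naturality n m g := by
    ext x
    apply Subtype.ext
    first
    | exact NatTrans.naturality_apply f g x.1
    | simp [GObj]


/-! ### Homotopy category -/


structure HoObj (X : SSet.{0}) where
  pt : X _⦋0⦌

def edgeSrc {X : SSet.{0}} (e : X _⦋1⦌) : X _⦋0⦌ := X.map (SimplexCategory.δ (1 : Fin 2)).op e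

def edgeTgt {X : SSet.{0}} (e : X _⦋1⦌) : X _⦋0⦌ := X.map (SimplexCategory.δ (0 : Fin 2)).op e

instance hoQuiver (X : SSet.{0}) : Quiver (HoObj X) where
  Hom a b := {e : X _⦋1⦌ // edgeSrc e = a.pt ∧ edgeTgt e = b.pt}

inductive HoRel (X : SSet.{0}) : ∀ ⦃a b : Paths (HoObj X)⦄, (a ⟶ b) → (a ⟶ b) → Prop where
  | comp (σ : X _⦋2⦌) {a b c : HoObj X} (f : a ⟶ b) (g : b ⟶ c) (h : a ⟶ c)
      (hf : f.1 = X.map (SimplexCategory.δ (2 : Fin 3)).op σ)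
      (hg : g.1 = X.map (SimplexCategory.δ (0 : Fin 3)).op σ)
      (hh : h.1 = X.map (SimplexCategory.δ (1 : Fin 3)).op σ) :
      HoRel X (f.toPath ≫ g.toPath) h.toPath
  /-- -/
  | id {a : HoObj X} (f : a ⟶ a)
      (hf : f.1 = X.map (SimplexCategory.σ (0 : Fin 1)).op a.pt) :
      HoRel X f.toPath (𝟙 ((Paths.of (HoObj X)).obj a))

abbrev HoCat (X : SSet.{0}) := CategoryTheory.Quotient (HoRel X)

instance (X : SSet.{0}) : Category (HoCat X) := CategoryTheory.Quotient.category (HoRel X)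

/-- The prefunctor on vertices and edges induced by a simplicial map. -/
def hoPre {X Y : SSet.{0}} (f : X ⟶ Y) : HoObj X ⥤q HoObj Y where
  obj a := ⟨f.app _ a.pt⟩
  map {a b} e := ⟨f.app _ e.1, by
    constructor
    · show Y.map _ _ = _
      rw [← FunctorToTypes.naturality]
      exact congrArg (f.app _) e.2.1
    · show Y.map _ _ = _
      rw [← FunctorToTypes.naturality]
      exact congrArg (f.app _) e.2.2⟩

/-- Lift to the path category. -/
def hoLift {X Y : SSet.{0}} (f : X ⟶ Y) : Paths (HoObj X) ⥤ HoCat Y :=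
  Paths.lift ((hoPre f).comp ((Paths.of (HoObj Y)).comp (Quotient.functor (HoRel Y)).toPrefunctor))

lemma hoLift_toPath {X Y : SSet.{0}} (f : X ⟶ Y) {a b : HoObj X} (e : a ⟶ b) :
    (hoLift f).map e.toPath =
      (Quotient.functor (HoRel Y)).map ((hoPre f).map e).toPath :=
  Paths.lift_toPath _ _

/-- The induced functor on homotopy categories. -/
def hoMap {X Y : SSet.{0}} (f : X ⟶ Y) : HoCat X ⥤ HoCat Y :=
  CategoryTheory.Quotient.lift (HoRel X) (hoLift f) (by
    intro a b g₁ g₂ h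
    induction h with
    | comp σ p q r hp hq hr =>
      erw [Functor.map_comp, hoLift_toPath, hoLift_toPath, hoLift_toPath,
        ← Functor.map_comp]
      apply CategoryTheory.Quotient.sound _
      apply HoRel.comp (f.app _ σ)
      · show f.app _ p.1 = _
        rw [hp]; exact NatTrans.naturality_apply f _ σ
      · show f.app _ q.1 = _
        rw [hq]; exact NatTrans.naturality_apply f _ σ
      · show f.app _ r.1 = _
        rw [hr]; exact NatTrans.naturality_apply f _ σ
    | id p hp =>
      have h1 : (Quotient.functor (HoRel Y)).map ((hoPre f).map p).toPath =
          (Quotient.functor (HoRel Y)).map (𝟙 ((Paths.of (HoObj Y)).obj ((hoPre f).obj _))) := by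
        apply CategoryTheory.Quotient.sound
        apply HoRel.id
        show f.app _ p.1 = _
        rw [hp]; exact NatTrans.naturality_apply f _ _
      rw [hoLift_toPath, h1, CategoryTheory.Functor.map_id]
      exact ((hoLift f).map_id _).symm)



noncomputable instance : MonoidalClosed SSet.{0} :=
  inferInstanceAs (MonoidalClosed (SimplexCategoryᵒᵖ ⥤ Type 0))

/-- A map `f : A ⟶ B` of simplicial sets is a categorical equivalence if, for every
quasicategory `Q`, the induced functor `ho(Q^B) ⥤ ho(Q^A)` is an equivalence of categories. -/
def IsCatEquiv {A B : SSet.{0}} (f : A ⟶ B) : Prop :=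
  ∀ (Q : SSet.{0}), SSet.Quasicategory Q →
    (hoMap ((MonoidalClosed.pre f).app Q)).IsEquivalence

/-- A categorical fibration (isofibration): right lifting property with respect to
monomorphisms that are categorical equivalences. -/
def IsCatFibration {X Y : SSet.{0}} (p : X ⟶ Y) : Prop :=
  ∀ ⦃A B : SSet.{0}⦄ (i : A ⟶ B), Mono i → IsCatEquiv i → HasLiftingProperty i p


/-! ### b construction -/


instance horn_mono (n : ℕ) (k : Fin (n+1)) : Mono Λ[n, k].ι := by
  have : ∀ m, Mono (Λ[n, k].ι.app m) := by
    intro m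
    rw [CategoryTheory.mono_iff_injective]
    exact fun a b h => Subtype.ext h
  exact NatTrans.mono_of_mono_app _

/-- A degenerate edge. -/
def IsDegenEdge (X : SSet.{0}) (e : X.obj (op ⦋1⦌)) : Prop :=
  ∃ v : X.obj (op ⦋0⦌), e = X.map (SimplexCategory.σ (0 : Fin 1)).op v

/-- The type of nondegenerate edges of `X`. -/
def NdEdge (X : SSet.{0}) : Type := {e : X.obj (op ⦋1⦌) // ¬ IsDegenEdge X e}

lemma mono_ndEdge {X Y : SSet.{0}} (f : X ⟶ Y) [Mono f] {e : X.obj (op ⦋1⦌)}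
    (he : ¬ IsDegenEdge X e) : ¬ IsDegenEdge Y (f.app _ e) := by
  rintro ⟨v, hv⟩
  apply he
  refine ⟨X.map (SimplexCategory.δ (0 : Fin 2)).op e, ?_⟩
  have hinj : Function.Injective (f.app (op ⦋1⦌)) := by
    rw [← CategoryTheory.mono_iff_injective]
    infer_instance
  have hds : SimplexCategory.δ (0 : Fin 2) ≫ SimplexCategory.σ (0 : Fin 1) = 𝟙 (⦋0⦌ : SimplexCategory) :=
    SimplexCategory.δ_comp_σ_self' (by rfl)
  have hv2 : v = Y.map (SimplexCategory.δ (0 : Fin 2)).op (f.app _ e) := by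
    rw [hv, ← FunctorToTypes.map_comp_apply, ← op_comp, hds, op_id,
      FunctorToTypes.map_id_apply]
  have key : f.app _ (X.map (SimplexCategory.σ (0 : Fin 1)).op
      (X.map (SimplexCategory.δ (0 : Fin 2)).op e)) = f.app _ e := by
    rw [FunctorToTypes.naturality, FunctorToTypes.naturality, ← hv2, ← hv]
  exact (hinj key).symm



/-- The canonical map `∐_S Δ[1] ⟶ X` indexed by nondegenerate edges. -/
noncomputable def ndToX (X : SSet.{0}) : (∐ fun _ : NdEdge X => Δ[1]) ⟶ X :=
  Sigma.desc fun s => (SSet.yonedaEquiv (X := X) (n := ⦋1⦌)).symm s.1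

/-- The coproduct of copies of `δ : Δ[1] ⟶ bΔ[1]`. -/
noncomputable def ndToB (X : SSet.{0}) :
    (∐ fun _ : NdEdge X => Δ[1]) ⟶ (∐ fun _ : NdEdge X => bDelta1) :=
  Limits.Sigma.map fun _ => deltaB

/-- `b X`: the pushout of `∐_S Δ[1] ⟶ X` along `∐_S δ`. -/
noncomputable def bObj (X : SSet.{0}) : SSet := pushout (ndToX X) (ndToB X)

/-- The canonical map `X ⟶ b X`. -/
noncomputable def bUnit (X : SSet.{0}) : X ⟶ bObj X := pushout.inl _ _

/-- The map `b X ⟶ b Y` induced by a monomorphism `X ⟶ Y`. -/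
noncomputable def bMap {X Y : SSet.{0}} (f : X ⟶ Y) [Mono f] : bObj X ⟶ bObj Y :=
  pushout.map (ndToX X) (ndToB X) (ndToX Y) (ndToB Y) f
    (Sigma.desc fun s => Sigma.ι (fun _ : NdEdge Y => bDelta1)
      (⟨f.app _ s.1, mono_ndEdge f s.2⟩ : NdEdge Y))
    (Sigma.desc fun s => Sigma.ι (fun _ : NdEdge Y => Δ[1])
      (⟨f.app _ s.1, mono_ndEdge f s.2⟩ : NdEdge Y))
    (by
      apply Sigma.hom_ext
      intro s
      simp only [ndToX, colimit.ι_desc_assoc, Cofan.mk_ι_app, colimit.ι_desc]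
      exact (yE_symm_comp f s.1).symm)
    (by
      apply Sigma.hom_ext
      intro s
      simp [ndToB, ndToX]
      exact (Sigma.ι_map (fun _ : NdEdge Y => deltaB) _).symm)


lemma bUnit_naturality {X Y : SSet.{0}} (f : X ⟶ Y) [Mono f] :
    bUnit X ≫ bMap f = f ≫ bUnit Y := by
  simp [bUnit, bMap]
  exact pushout.inl_desc _ _ _


/-- If `Z` and `Y` have all edges invertible and `g : Z ⟶ Y` has the
right lifting property with respect to all maps `b(Λ[n,k]) ⟶ b(Δ[n])` (`n ≥ 1`),
then `g` is a Kan fibration. -/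
theorem kan_fibration_of_rlp_b_horns {Z Y : SSet.{0}}
    (hZ : ∀ e : Δ[1] ⟶ Z, IsInvertibleEdge e)
    (hY : ∀ e : Δ[1] ⟶ Y, IsInvertibleEdge e) (g : Z ⟶ Y)
    (h : ∀ ⦃n : ℕ⦄, 1 ≤ n → ∀ (k : Fin (n + 1)),
      HasLiftingProperty (bMap Λ[n, k].ι) g) :
    IsKanFibration g := by
  intro n hn k
  have : HasLiftingProperty (bMap (Λ[n, k].ι)) g := h hn k
  constructor
  intro u v sq
  classical
  set i := Λ[n, k].ι with hi
  -- choices extending edges of Z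
  choose ys hys using fun s : NdEdge (Λ[n, k] : SSet) =>
    hZ ((SSet.yonedaEquiv (X := Z) (n := ⦋1⦌)).symm (u.app _ s.1))
  -- injectivity of i on edges
  have hinj : Function.Injective (i.app (op ⦋1⦌)) := fun a b hab => Subtype.ext hab
  -- the extension of u to b(Λ[n,k])
  have hcommZ : ndToX (Λ[n, k] : SSet) ≫ u = ndToB (Λ[n, k] : SSet) ≫ Sigma.desc ys := by
    apply Sigma.hom_ext
    intro s
    simp only [ndToX, ndToB, colimit.ι_desc_assoc, Cofan.mk_ι_app, ι_colimMap_assoc,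
      Discrete.functor_obj_eq_as, Discrete.natTrans_app, colimit.ι_desc]
    erw [Limits.Sigma.ι_map_assoc, colimit.ι_desc]
    erw [hys s, yE_symm_comp]
  set u' : bObj (Λ[n, k] : SSet) ⟶ Z := pushout.desc u (Sigma.desc ys) hcommZ with hu'
  -- the extension of v to b(Δ[n])
  have hedge : ∀ s : NdEdge (Λ[n, k] : SSet),
      (SSet.yonedaEquiv (X := Y) (n := ⦋1⦌)).symm (v.app _ (i.app _ s.1)) =
        deltaB ≫ ys s ≫ g := by
    intro s
    have h1 : v.app (op ⦋1⦌) (i.app (op ⦋1⦌) s.1) = g.app (op ⦋1⦌) (u.app (op ⦋1⦌) s.1) := by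
      have := congrArg (fun (w : (Λ[n, k] : SSet) ⟶ Y) => w.app (op ⦋1⦌) s.1) sq.w
      exact this.symm
    rw [h1, yE_symm_comp, ← hys s, Category.assoc]
  set zt : ∀ t : NdEdge Δ[n], bDelta1 ⟶ Y := fun t =>
    if ht : ∃ s : NdEdge (Λ[n, k] : SSet), i.app (op ⦋1⦌) s.1 = t.1 then ys ht.choose ≫ g
    else (hY ((SSet.yonedaEquiv (X := Y) (n := ⦋1⦌)).symm (v.app _ t.1))).choose with hzt
  have hztspec : ∀ t : NdEdge Δ[n],
      deltaB ≫ zt t = (SSet.yonedaEquiv (X := Y) (n := ⦋1⦌)).symm (v.app _ t.1) := by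
    intro t
    rw [hzt]
    dsimp only
    split
    · next ht =>
      rw [← hedge ht.choose]
      exact congrArg (fun x => (SSet.yonedaEquiv (X := Y) (n := ⦋1⦌)).symm (v.app (op ⦋1⦌) x)) ht.choose_spec
    · next ht =>
      exact (hY ((SSet.yonedaEquiv (X := Y) (n := ⦋1⦌)).symm (v.app _ t.1))).choose_spec
  have hcommY : ndToX Δ[n] ≫ v = ndToB Δ[n] ≫ Sigma.desc zt := by
    apply Sigma.hom_ext
    intro t
    simp only [ndToX, ndToB, colimit.ι_desc_assoc, Cofan.mk_ι_app, ι_colimMap_assoc,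
      Discrete.functor_obj_eq_as, Discrete.natTrans_app, colimit.ι_desc]
    erw [Limits.Sigma.ι_map_assoc, colimit.ι_desc]
    erw [hztspec t, yE_symm_comp]
  set v' : bObj Δ[n] ⟶ Y := pushout.desc v (Sigma.desc zt) hcommY with hv'
  -- the big square commutes
  have hbig : CommSq u' (bMap i) g v' := by
    constructor
    apply pushout.hom_ext
    · erw [← Category.assoc, ← Category.assoc]
      have hb := bUnit_naturality i
      show bUnit (Λ[n, k] : SSet) ≫ u' ≫ g = (bUnit (Λ[n, k] : SSet) ≫ bMap i) ≫ v'
      rw [hb, hu', hv']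
      simp only [bUnit, Category.assoc, pushout.inl_desc, pushout.inl_desc_assoc]
      erw [pushout.inl_desc_assoc, Category.assoc, pushout.inl_desc]
      exact sq.w
    · have e1 : pushout.inr _ _ ≫ u' = Limits.Sigma.desc ys := pushout.inr_desc _ _ _
      have e2 : pushout.inr _ _ ≫ bMap i =
          (Limits.Sigma.desc fun s : NdEdge (Λ[n, k] : SSet) =>
            Sigma.ι (fun _ : NdEdge Δ[n] => bDelta1)
              (⟨i.app _ s.1, mono_ndEdge i s.2⟩ : NdEdge Δ[n])) ≫ pushout.inr _ _ :=
        pushout.inr_desc _ _ _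
      erw [← Category.assoc, e1, ← Category.assoc, e2, Category.assoc, hv', pushout.inr_desc]
      apply Sigma.hom_ext
      intro s
      simp only [colimit.ι_desc_assoc, Cofan.mk_ι_app, colimit.ι_desc]
      -- goal: ys s ≫ g = zt ⟨i.app _ s.1, _⟩
      rw [hzt]
      dsimp only
      have hex : ∃ s' : NdEdge (Λ[n, k] : SSet),
          i.app (op ⦋1⦌) s'.1 = (⟨i.app _ s.1, mono_ndEdge i s.2⟩ : NdEdge Δ[n]).1 := ⟨s, rfl⟩
      rw [dif_pos hex]
      have : hex.choose = s := Subtype.ext (hinj hex.choose_spec)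
      rw [this]
  refine ⟨⟨⟨bUnit Δ[n] ≫ hbig.lift, ?_, ?_⟩⟩⟩
  · erw [← Category.assoc, ← bUnit_naturality i, Category.assoc, hbig.fac_left, hu', bUnit,
      pushout.inl_desc]
  · erw [Category.assoc, hbig.fac_right, hv', bUnit, pushout.inl_desc]


end IndexedPaper
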